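/- Let Σ = [[Σ11, Σ12],[Σ21, Σ22]] be the characteristic function arising from an AIP_S-admissible data set via the Redheffer construction (in particular Σ22(0) = 0). Assume the multiplication operator M_{Σ12} : Hol_{Δ̃*}(D) → Hol_Y(D) has trivial kernel and M_{Σ21} : Hol_U(D) → Hol_{Δ̃}(D) has dense range. Then the Redheffer transform R_Σ : S(Δ̃, Δ̃*) → S(U,Y), ℰ ↦ Σ11 + Σ12(I − ℰΣ22)^{-1}ℰΣ21, is injective, and for every ℰ ∈ S(Δ̃, Δ̃*) the multiplication operator M_G : H(K_ℰ) → H(K_S) with G(z) = Σ12(z)(I − ℰ(z)Σ22(z))^{-1} and S = R_Σ[ℰ] has trivial kernel. -/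

import Mathlib

open ContinuousLinearMap Metric
open scoped InnerProductSpace ComplexOrder

noncomputable section

/-- The de Branges–Rovnyak kernel `K_S(z,ζ) = (I − S(z)S(ζ)*)/(1 − z ζ̄)`. -/
def dbrKernel {U Y : Type*}
    [NormedAddCommGroup U] [InnerProductSpace ℂ U] [CompleteSpace U]
    [NormedAddCommGroup Y] [InnerProductSpace ℂ Y] [CompleteSpace Y]
    (S : ℂ → (U →L[ℂ] Y)) (z ζ : ℂ) : Y →L[ℂ] Y :=
  (1 - z * (starRingEnd ℂ) ζ)⁻¹ • (1 - (S z) ∘L (adjoint (S ζ)))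

/-- The operator-valued Schur class on the unit disk. -/
def IsSchur {U Y : Type*}
    [NormedAddCommGroup U] [NormedSpace ℂ U]
    [NormedAddCommGroup Y] [NormedSpace ℂ Y]
    (S : ℂ → (U →L[ℂ] Y)) : Prop :=
  AnalyticOnNhd ℂ S (ball (0:ℂ) 1) ∧ ∀ z ∈ ball (0:ℂ) 1, ‖S z‖ ≤ 1

/-- `H` (with realization map `J` and kernel elements `k`) is the reproducing kernel
Hilbert space of the de Branges–Rovnyak kernel `K_S`. -/
structure IsDBRSpace {U Y : Type*}
    [NormedAddCommGroup U] [InnerProductSpace ℂ U] [CompleteSpace U]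
    [NormedAddCommGroup Y] [InnerProductSpace ℂ Y] [CompleteSpace Y]
    (S : ℂ → (U →L[ℂ] Y)) (H : Type*) [NormedAddCommGroup H]
    [InnerProductSpace ℂ H] [CompleteSpace H]
    (J : H →ₗ[ℂ] (ℂ → Y)) (k : ℂ → Y → H) : Prop where
  ext : ∀ f g : H, (∀ z ∈ ball (0:ℂ) 1, J f z = J g z) → f = g
  kernel_eq : ∀ ζ ∈ ball (0:ℂ) 1, ∀ y : Y, ∀ z ∈ ball (0:ℂ) 1,
    J (k ζ y) z = dbrKernel S z ζ y
  reproducing : ∀ ζ ∈ ball (0:ℂ) 1, ∀ (y : Y) (f : H),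
    ⟪k ζ y, f⟫_ℂ = ⟪y, J f ζ⟫_ℂ

/-- The rank-one operator `x x* : y ↦ ⟨y, x⟩ x`. -/
def rankOne {X : Type*} [NormedAddCommGroup X] [InnerProductSpace ℂ X]
    (x : X) : X →L[ℂ] X :=
  (innerSL ℂ x).smulRight x

/-- A transfer-function block `z ↦ D + z C (I − zA)^{-1} B`. -/
def tblock {X0 V W : Type*}
    [NormedAddCommGroup X0] [NormedSpace ℂ X0] [CompleteSpace X0]
    [NormedAddCommGroup V] [NormedSpace ℂ V]
    [NormedAddCommGroup W] [NormedSpace ℂ W]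
    (A : X0 →L[ℂ] X0) (B : V →L[ℂ] X0) (C : X0 →L[ℂ] W) (D : V →L[ℂ] W)
    (z : ℂ) : V →L[ℂ] W :=
  D + z • (C ∘L (Ring.inverse (1 - z • A)) ∘L B)

/-- The Redheffer linear-fractional transform
`R_Σ[ℰ] = Σ11 + Σ12 (I − ℰ Σ22)^{-1} ℰ Σ21` associated with the colligation
`[[A,B1,B2],[C1,D11,D12],[C2,D21,0]]`. -/
def redheffer {U Y X0 Dt Ds : Type*}
    [NormedAddCommGroup U] [NormedSpace ℂ U]
    [NormedAddCommGroup Y] [NormedSpace ℂ Y]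
    [NormedAddCommGroup X0] [NormedSpace ℂ X0] [CompleteSpace X0]
    [NormedAddCommGroup Dt] [NormedSpace ℂ Dt] [CompleteSpace Dt]
    [NormedAddCommGroup Ds] [NormedSpace ℂ Ds] [CompleteSpace Ds]
    (A : X0 →L[ℂ] X0) (B1 : U →L[ℂ] X0) (B2 : Ds →L[ℂ] X0)
    (C1 : X0 →L[ℂ] Y) (C2 : X0 →L[ℂ] Dt)
    (D11 : U →L[ℂ] Y) (D12 : Ds →L[ℂ] Y) (D21 : U →L[ℂ] Dt)
    (ℰ : ℂ → (Dt →L[ℂ] Ds)) (z : ℂ) : U →L[ℂ] Y :=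
  tblock A B1 C1 D11 z +
    (tblock A B2 C1 D12 z) ∘L
      (Ring.inverse (1 - (ℰ z) ∘L (tblock A B2 C2 0 z))) ∘L
        ((ℰ z) ∘L (tblock A B1 C2 D21 z))

/-- The unitary colligation `U = [[A,B1,B2],[C1,D11,D12],[C2,D21,0]]` obtained from the
`AIP_S`-admissible data set `{P,T,E,N}` via the construction of the Abstract
Interpolation Problem: here `ρ : X → X0` plays the role of `P^{1/2} : X → X0` with
`X0 = closure Ran P^{1/2}` (so `ρ` has dense range and `ρ* ρ = P`), the block operator
is unitary, it implements the isometry `V [P^{1/2}x; Nx] = [P^{1/2}Tx; Ex]`, the third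
input column is a unitary identification of `Δ̃*` with the defect space
`Δ* = (X0 ⊕ Y) ⊖ R_V`, and the adjoint of the third output row is a unitary
identification of `Δ̃` with the defect space `Δ = (X0 ⊕ U) ⊖ D_V`. -/
structure IsRedhefferColligation
    {X U Y X0 Dt Ds : Type*}
    [NormedAddCommGroup X] [InnerProductSpace ℂ X] [CompleteSpace X]
    [NormedAddCommGroup U] [InnerProductSpace ℂ U] [CompleteSpace U]
    [NormedAddCommGroup Y] [InnerProductSpace ℂ Y] [CompleteSpace Y]
    [NormedAddCommGroup X0] [InnerProductSpace ℂ X0] [CompleteSpace X0]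
    [NormedAddCommGroup Dt] [InnerProductSpace ℂ Dt] [CompleteSpace Dt]
    [NormedAddCommGroup Ds] [InnerProductSpace ℂ Ds] [CompleteSpace Ds]
    (P T : X →L[ℂ] X) (E : X →L[ℂ] Y) (N : X →L[ℂ] U)
    (ρ : X →L[ℂ] X0)
    (A : X0 →L[ℂ] X0) (B1 : U →L[ℂ] X0) (B2 : Ds →L[ℂ] X0)
    (C1 : X0 →L[ℂ] Y) (C2 : X0 →L[ℂ] Dt)
    (D11 : U →L[ℂ] Y) (D12 : Ds →L[ℂ] Y) (D21 : U →L[ℂ] Dt) : Prop where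
  rho_dense : DenseRange ρ
  rho_sq : adjoint ρ ∘L ρ = P
  isometric : ∀ (x0 : X0) (u : U) (d : Ds),
    ‖A x0 + B1 u + B2 d‖ ^ 2 + ‖C1 x0 + D11 u + D12 d‖ ^ 2 + ‖C2 x0 + D21 u‖ ^ 2
      = ‖x0‖ ^ 2 + ‖u‖ ^ 2 + ‖d‖ ^ 2
  coisometric : ∀ (x0 : X0) (y : Y) (d : Dt),
    ‖adjoint A x0 + adjoint C1 y + adjoint C2 d‖ ^ 2
      + ‖adjoint B1 x0 + adjoint D11 y + adjoint D21 d‖ ^ 2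
      + ‖adjoint B2 x0 + adjoint D12 y‖ ^ 2
      = ‖x0‖ ^ 2 + ‖y‖ ^ 2 + ‖d‖ ^ 2
  collig1 : ∀ x : X, A (ρ x) + B1 (N x) = ρ (T x)
  collig2 : ∀ x : X, C1 (ρ x) + D11 (N x) = E x
  collig3 : ∀ x : X, C2 (ρ x) + D21 (N x) = 0
  defect_star : ∀ (d : Ds) (x : X), ⟪B2 d, ρ (T x)⟫_ℂ + ⟪D12 d, E x⟫_ℂ = 0
  defect_star_iso : ∀ d : Ds, ‖B2 d‖ ^ 2 + ‖D12 d‖ ^ 2 = ‖d‖ ^ 2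
  defect_star_onto : ∀ (x0 : X0) (y : Y),
    (∀ x : X, ⟪x0, ρ (T x)⟫_ℂ + ⟪y, E x⟫_ℂ = 0) → ∃ d : Ds, B2 d = x0 ∧ D12 d = y
  defect : ∀ (d : Dt) (x : X), ⟪adjoint C2 d, ρ x⟫_ℂ + ⟪adjoint D21 d, N x⟫_ℂ = 0
  defect_iso : ∀ d : Dt, ‖adjoint C2 d‖ ^ 2 + ‖adjoint D21 d‖ ^ 2 = ‖d‖ ^ 2
  defect_onto : ∀ (x0 : X0) (u : U),
    (∀ x : X, ⟪x0, ρ x⟫_ℂ + ⟪u, N x⟫_ℂ = 0) →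
      ∃ d : Dt, adjoint C2 d = x0 ∧ adjoint D21 d = u


/-- The function `G(z) = Σ12(z)(I − ℰ(z)Σ22(z))^{-1}`. -/
def Gfun {U Y X0 Dt Ds : Type*}
    [NormedAddCommGroup U] [NormedSpace ℂ U]
    [NormedAddCommGroup Y] [NormedSpace ℂ Y]
    [NormedAddCommGroup X0] [NormedSpace ℂ X0] [CompleteSpace X0]
    [NormedAddCommGroup Dt] [NormedSpace ℂ Dt] [CompleteSpace Dt]
    [NormedAddCommGroup Ds] [NormedSpace ℂ Ds] [CompleteSpace Ds]
    (A : X0 →L[ℂ] X0) (B2 : Ds →L[ℂ] X0)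
    (C1 : X0 →L[ℂ] Y) (C2 : X0 →L[ℂ] Dt) (D12 : Ds →L[ℂ] Y)
    (ℰ : ℂ → (Dt →L[ℂ] Ds)) (z : ℂ) : Ds →L[ℂ] Y :=
  (tblock A B2 C1 D12 z) ∘L (Ring.inverse (1 - (ℰ z) ∘L (tblock A B2 C2 0 z)))

/-! ### Auxiliary lemmas -/

section Helpers

lemma myIsUnit' {R : Type*} [NormedRing R] [CompleteSpace R] (t : R) (h : ‖t‖ < 1) :
    IsUnit (1 - t) := (Units.oneSub t h).isUnit

lemma isUnit_one_sub_smul {X0 : Type*} [NormedAddCommGroup X0] [NormedSpace ℂ X0]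
    [CompleteSpace X0] (A : X0 →L[ℂ] X0) (hA : ‖A‖ ≤ 1) {z : ℂ} (hz : ‖z‖ < 1) :
    IsUnit (1 - z • A) := by
  apply myIsUnit'
  calc ‖z • A‖ = ‖z‖ * ‖A‖ := norm_smul z A
  _ ≤ ‖z‖ * 1 := by gcongr
  _ < 1 := by simpa using hz

lemma resolvent_diffOn {X0 : Type*} [NormedAddCommGroup X0] [NormedSpace ℂ X0]
    [CompleteSpace X0] (A : X0 →L[ℂ] X0) (hA : ‖A‖ ≤ 1) :
    DifferentiableOn ℂ (fun z => Ring.inverse (1 - z • A)) (ball (0:ℂ) 1) := by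
  intro z hz
  have hz1 : ‖z‖ < 1 := by simpa [mem_ball, dist_eq_norm] using hz
  have hd : DifferentiableAt ℂ (fun z : ℂ => 1 - z • A) z :=
    (differentiableAt_const _).sub ((differentiableAt_id.fun_smul (differentiableAt_const A)))
  exact (hd.inverse (isUnit_one_sub_smul A hA hz1)).differentiableWithinAt

lemma tblock_diffOn {X0 V W : Type*}
    [NormedAddCommGroup X0] [NormedSpace ℂ X0] [CompleteSpace X0]
    [NormedAddCommGroup V] [NormedSpace ℂ V]
    [NormedAddCommGroup W] [NormedSpace ℂ W]
    (A : X0 →L[ℂ] X0) (B : V →L[ℂ] X0) (C : X0 →L[ℂ] W) (D : V →L[ℂ] W)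
    (hA : ‖A‖ ≤ 1) :
    DifferentiableOn ℂ (tblock A B C D) (ball (0:ℂ) 1) := by
  intro z hz
  have h1 := (resolvent_diffOn A hA z hz)
  have h2 : DifferentiableWithinAt ℂ
      (fun z : ℂ => D + z • (C ∘L (Ring.inverse (1 - z • A)) ∘L B)) (ball (0:ℂ) 1) z := by
    apply (differentiableWithinAt_const _).add
    apply DifferentiableWithinAt.fun_smul (differentiableAt_id.differentiableWithinAt) ?_
    exact ((differentiableWithinAt_const C).clm_comp
      (h1.clm_comp (differentiableWithinAt_const B)))
  exact h2

/-- key contraction estimate for `Σ22`. -/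
lemma sigma22_contract {X0 U Y Ds Dt : Type*}
    [NormedAddCommGroup X0] [NormedSpace ℂ X0] [CompleteSpace X0]
    [NormedAddCommGroup U] [NormedSpace ℂ U]
    [NormedAddCommGroup Y] [NormedSpace ℂ Y]
    [NormedAddCommGroup Ds] [NormedSpace ℂ Ds]
    [NormedAddCommGroup Dt] [NormedSpace ℂ Dt]
    (A : X0 →L[ℂ] X0) (B1 : U →L[ℂ] X0) (B2 : Ds →L[ℂ] X0)
    (C1 : X0 →L[ℂ] Y) (C2 : X0 →L[ℂ] Dt)
    (D11 : U →L[ℂ] Y) (D12 : Ds →L[ℂ] Y) (D21 : U →L[ℂ] Dt)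
    (hiso : ∀ (x0 : X0) (u : U) (d : Ds),
      ‖A x0 + B1 u + B2 d‖ ^ 2 + ‖C1 x0 + D11 u + D12 d‖ ^ 2 + ‖C2 x0 + D21 u‖ ^ 2
        = ‖x0‖ ^ 2 + ‖u‖ ^ 2 + ‖d‖ ^ 2)
    {z : ℂ} (hz : ‖z‖ < 1) (d : Ds) :
    ‖tblock A B2 C2 0 z d‖ ≤ ‖z‖ * ‖d‖ := by
  have hAle : ‖A‖ ≤ 1 := by
    refine opNorm_le_bound _ zero_le_one ?_
    intro x
    have h := hiso x 0 0
    simp only [map_zero, add_zero, norm_zero] at h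
    nlinarith [norm_nonneg (A x), norm_nonneg x, norm_nonneg (C1 x), norm_nonneg (C2 x)]
  have hC2le : ∀ x : X0, ‖C2 x‖ ≤ ‖x‖ := by
    intro x
    have h := hiso x 0 0
    simp only [map_zero, add_zero, norm_zero] at h
    nlinarith [norm_nonneg (C2 x), norm_nonneg x, norm_nonneg (C1 x), norm_nonneg (A x)]
  set x := Ring.inverse (1 - z • A) (B2 d) with hxdef
  have hu := isUnit_one_sub_smul A hAle hz
  have hxe : x - z • A x = B2 d := by
    have h1 : (1 - z • A) * Ring.inverse (1 - z • A) = 1 := Ring.mul_inverse_cancel _ hu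
    have h2 := congrArg (fun (T : X0 →L[ℂ] X0) => T (B2 d)) h1
    simpa [ContinuousLinearMap.mul_apply, sub_apply, smul_apply, one_apply] using h2
  have hkey := hiso (z • x) 0 d
  simp only [map_zero, add_zero, norm_zero, map_smul] at hkey
  have hAx : z • A x + B2 d = x := by
    rw [← hxe]; abel
  rw [hAx] at hkey
  have htb : tblock A B2 C2 0 z d = z • C2 x := by
    simp [tblock, ContinuousLinearMap.add_apply, smul_apply, comp_apply, hxdef]
  rw [htb]
  have hnzC : ‖z • C2 x‖ = ‖z‖ * ‖C2 x‖ := norm_smul _ _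
  have hnzx : ‖z • x‖ = ‖z‖ * ‖x‖ := norm_smul _ _
  rw [hnzx] at hkey
  rw [hnzC]
  rcases le_or_gt ‖x‖ ‖d‖ with hle | hlt
  · calc ‖z‖ * ‖C2 x‖ ≤ ‖z‖ * ‖x‖ := by gcongr; exact hC2le x
    _ ≤ ‖z‖ * ‖d‖ := by gcongr
  · have hz2 : ‖z‖ ^ 2 < 1 := by nlinarith [norm_nonneg z]
    have hxd2 : ‖d‖ ^ 2 < ‖x‖ ^ 2 := by nlinarith [norm_nonneg d]
    have hb : ‖z • C2 x‖ ^ 2 ≤ ‖z‖ ^ 2 * ‖x‖ ^ 2 + ‖d‖ ^ 2 - ‖x‖ ^ 2 := by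
      nlinarith [norm_nonneg (z • C1 x + D12 d)]
    have hb2 : ‖z • C2 x‖ ^ 2 ≤ ‖z‖ ^ 2 * ‖d‖ ^ 2 := by nlinarith
    rw [hnzC] at hb2
    nlinarith [mul_nonneg (norm_nonneg z) (norm_nonneg (C2 x)),
      mul_nonneg (norm_nonneg z) (norm_nonneg d)]

variable {Dt Ds : Type*}
    [NormedAddCommGroup Dt] [InnerProductSpace ℂ Dt] [CompleteSpace Dt]
    [NormedAddCommGroup Ds] [InnerProductSpace ℂ Ds] [CompleteSpace Ds]
    {HE : Type*} [NormedAddCommGroup HE] [InnerProductSpace ℂ HE] [CompleteSpace HE]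
    {ℰ : ℂ → (Dt →L[ℂ] Ds)} {JE : HE →ₗ[ℂ] (ℂ → Ds)} {kE : ℂ → Ds → HE}

lemma one_sub_mul_conj (z : ℂ) : 1 - z * (starRingEnd ℂ) z = ((1 - ‖z‖^2 : ℝ) : ℂ) := by
  rw [Complex.mul_conj]
  push_cast [Complex.normSq_eq_norm_sq]
  ring

lemma dbr_kernel_norm_sq (hHE : IsDBRSpace ℰ HE JE kE) {z : ℂ} (hz : z ∈ ball (0:ℂ) 1)
    (v : Ds) : ‖kE z v‖^2 ≤ (1 - ‖z‖^2)⁻¹ * ‖v‖^2 := by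
  have hz1 : ‖z‖ < 1 := by simpa [mem_ball, dist_eq_norm] using hz
  have hpos : (0:ℝ) < 1 - ‖z‖^2 := by nlinarith [norm_nonneg z]
  set w := adjoint (ℰ z) v with hw
  have e1 : ⟪kE z v, kE z v⟫_ℂ = ⟪v, JE (kE z v) z⟫_ℂ := hHE.reproducing z hz v (kE z v)
  have e2 : JE (kE z v) z = ((1 - ‖z‖^2 : ℝ) : ℂ)⁻¹ • (v - ℰ z w) := by
    rw [hHE.kernel_eq z hz v z hz]
    simp [dbrKernel, one_sub_mul_conj, hw]
  have e3 : ⟪v, ℰ z w⟫_ℂ = ((‖w‖:ℝ):ℂ)^2 := by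
    rw [← ContinuousLinearMap.adjoint_inner_left (ℰ z) w v, ← hw]
    exact inner_self_eq_norm_sq_to_K w
  have e5 : (‖kE z v‖^2 : ℝ) = (1 - ‖z‖^2)⁻¹ * (‖v‖^2 - ‖w‖^2) := by
    have e0 := inner_self_eq_norm_sq_to_K (𝕜 := ℂ) (kE z v)
    rw [e1, e2, inner_smul_right, inner_sub_right, e3, inner_self_eq_norm_sq_to_K] at e0
    simp only [show ∀ r : ℝ, (RCLike.ofReal r : ℂ) = Complex.ofReal r from fun _ => rfl] at e0
    push_cast at e0
    have h1 : ((1:ℂ) - ((‖z‖ : ℝ):ℂ)^2) ≠ 0 := by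
      have h2 : (1 - ‖z‖^2 : ℝ) ≠ 0 := ne_of_gt hpos
      exact_mod_cast h2
    apply Complex.ofReal_injective
    push_cast
    field_simp at e0 ⊢
    linear_combination (-1 : ℂ) * e0
  have h3 : (0:ℝ) ≤ ‖w‖^2 := sq_nonneg _
  rw [e5]
  have hinv : (0:ℝ) ≤ (1 - ‖z‖^2)⁻¹ := le_of_lt (inv_pos.mpr hpos)
  nlinarith

lemma dbr_eval_bound (hHE : IsDBRSpace ℰ HE JE kE) (f : HE) {z : ℂ}
    (hz : z ∈ ball (0:ℂ) 1) :
    ‖JE f z‖ ≤ Real.sqrt ((1 - ‖z‖^2)⁻¹) * ‖f‖ := by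
  have hz1 : ‖z‖ < 1 := by simpa [mem_ball, dist_eq_norm] using hz
  have hpos : (0:ℝ) < 1 - ‖z‖^2 := by nlinarith [norm_nonneg z]
  have hinv : (0:ℝ) ≤ (1 - ‖z‖^2)⁻¹ := le_of_lt (inv_pos.mpr hpos)
  set v := JE f z with hv
  set s := Real.sqrt ((1 - ‖z‖^2)⁻¹) with hs
  have hks : ‖kE z v‖ ≤ s * ‖v‖ := by
    have h1 : ‖kE z v‖^2 ≤ (s * ‖v‖)^2 := by
      rw [mul_pow, hs, Real.sq_sqrt hinv]
      exact dbr_kernel_norm_sq hHE hz v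
    have h2 : (0:ℝ) ≤ s * ‖v‖ := mul_nonneg (Real.sqrt_nonneg _) (norm_nonneg _)
    nlinarith [norm_nonneg (kE z v)]
  have hrepro : ⟪kE z v, f⟫_ℂ = ((‖v‖:ℝ):ℂ)^2 := by
    rw [hHE.reproducing z hz v f, ← hv]
    exact inner_self_eq_norm_sq_to_K v
  have hb : ‖v‖^2 ≤ ‖kE z v‖ * ‖f‖ := by
    have hn := norm_inner_le_norm (𝕜 := ℂ) (kE z v) f
    rw [hrepro] at hn
    have h2 : ‖((‖v‖:ℝ):ℂ)^2‖ = ‖v‖^2 := by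
      rw [norm_pow, Complex.norm_real, Real.norm_eq_abs, abs_of_nonneg (norm_nonneg v)]
    linarith [h2 ▸ hn]
  have hs0 : 0 ≤ s := Real.sqrt_nonneg _
  nlinarith [norm_nonneg v, norm_nonneg f, mul_nonneg hs0 (norm_nonneg f)]

lemma dbr_diffOn (hHE : IsDBRSpace ℰ HE JE kE)
    (hEd : DifferentiableOn ℂ ℰ (ball (0:ℂ) 1)) (f : HE) :
    DifferentiableOn ℂ (fun z => JE f z) (ball (0:ℂ) 1) := by
  classical
  set S : Set HE := {v | ∃ ζ ∈ ball (0:ℂ) 1, ∃ d : Ds, kE ζ d = v} with hS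
  set K : Submodule ℂ HE := Submodule.span ℂ S with hK
  have hgen : ∀ v ∈ K, DifferentiableOn ℂ (fun z => JE v z) (ball (0:ℂ) 1) := by
    intro v hv
    induction hv using Submodule.span_induction with
    | mem x hx =>
      obtain ⟨ζ, hζ, d, rfl⟩ := hx
      have hζ1 : ‖ζ‖ < 1 := mem_ball_zero_iff.mp hζ
      have hdiff : DifferentiableOn ℂ
          (fun z : ℂ => (1 - z * (starRingEnd ℂ) ζ)⁻¹ • (d - ℰ z ((adjoint (ℰ ζ)) d)))
          (ball (0:ℂ) 1) := by
        intro z hz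
        have hz1 : ‖z‖ < 1 := mem_ball_zero_iff.mp hz
        have hne : 1 - z * (starRingEnd ℂ) ζ ≠ 0 := by
          intro hcontra
          have h2 : z * (starRingEnd ℂ) ζ = 1 := (sub_eq_zero.mp hcontra).symm
          have h3 : ‖z * (starRingEnd ℂ) ζ‖ < 1 := by
            rw [norm_mul, RingHomIsometric.norm_map]
            nlinarith [norm_nonneg z, norm_nonneg ζ]
          rw [h2] at h3; simp at h3
        have hscal : DifferentiableWithinAt ℂ
            (fun z : ℂ => (1 - z * (starRingEnd ℂ) ζ)⁻¹) (ball (0:ℂ) 1) z := by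
          apply DifferentiableWithinAt.inv
          · exact ((differentiableWithinAt_const _).sub
              ((differentiableAt_id.differentiableWithinAt).mul_const _))
          · exact hne
        have hvec : DifferentiableWithinAt ℂ
            (fun z : ℂ => d - ℰ z ((adjoint (ℰ ζ)) d)) (ball (0:ℂ) 1) z := by
          apply (differentiableWithinAt_const _).sub
          exact (hEd z hz).clm_apply (differentiableWithinAt_const _)
        exact hscal.smul hvec
      apply hdiff.congr
      intro z hz
      rw [hHE.kernel_eq ζ hζ d z hz]
      simp [dbrKernel]
    | zero => simp only [map_zero]; exact differentiableOn_const 0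
    | add x y hx hy ihx ihy =>
      have h1 : (fun z => JE (x + y) z) = fun z => JE x z + JE y z := by
        funext z; rw [map_add]; rfl
      rw [h1]; exact ihx.add ihy
    | smul c x hx ih =>
      have h1 : (fun z => JE (c • x) z) = fun z => c • JE x z := by
        funext z; rw [map_smul]; rfl
      rw [h1]; exact ih.const_smul c
  have htop : K.topologicalClosure = ⊤ := by
    rw [Submodule.topologicalClosure_eq_top_iff, Submodule.eq_bot_iff]
    intro g hg
    refine hHE.ext g 0 ?_
    intro ζ hζ
    have h0 : ⟪kE ζ (JE g ζ), g⟫_ℂ = 0 :=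
      hg _ (Submodule.subset_span ⟨ζ, hζ, JE g ζ, rfl⟩)
    rw [hHE.reproducing ζ hζ _ g] at h0
    rw [inner_self_eq_zero.mp h0]
    simp
  have hfcl : f ∈ closure (K : Set HE) := by
    have h1 : f ∈ K.topologicalClosure := htop ▸ Submodule.mem_top
    exact h1
  obtain ⟨g, hgK, hgf⟩ := mem_closure_iff_seq_limit.mp hfcl
  have hlim : TendstoLocallyUniformlyOn (fun n z => JE (g n) z) (fun z => JE f z)
      Filter.atTop (ball (0:ℂ) 1) := by
    rw [tendstoLocallyUniformlyOn_iff_forall_isCompact isOpen_ball]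
    intro Kc hKcb hKcc
    rcases Kc.eq_empty_or_nonempty with rfl | hne
    · exact tendstoUniformlyOn_empty
    obtain ⟨z0, hz0K, hmax⟩ := hKcc.exists_isMaxOn hne continuous_norm.continuousOn
    have hs0 : ‖z0‖ < 1 := mem_ball_zero_iff.mp (hKcb hz0K)
    set C := Real.sqrt ((1 - ‖z0‖^2)⁻¹) with hC
    have hC0 : 0 ≤ C := Real.sqrt_nonneg _
    have hCb : ∀ z ∈ Kc, Real.sqrt ((1 - ‖z‖^2)⁻¹) ≤ C := by
      intro z hzK
      have hz1 : ‖z‖ ≤ ‖z0‖ := hmax hzK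
      apply Real.sqrt_le_sqrt
      have h1 : (0:ℝ) < 1 - ‖z0‖^2 := by nlinarith [norm_nonneg z0]
      have h2 : 1 - ‖z0‖^2 ≤ 1 - ‖z‖^2 := by nlinarith [norm_nonneg z]
      exact inv_anti₀ h1 h2
    rw [Metric.tendstoUniformlyOn_iff]
    intro ε hε
    have hεC : 0 < ε / (C + 1) := by positivity
    have hconv : Filter.Tendsto (fun n => ‖f - g n‖) Filter.atTop (nhds 0) := by
      have h1 := tendsto_iff_norm_sub_tendsto_zero.mp hgf
      refine h1.congr ?_
      intro n; rw [norm_sub_rev]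
    have hev : ∀ᶠ n in Filter.atTop, ‖f - g n‖ < ε / (C + 1) :=
      hconv.eventually_lt_const hεC
    filter_upwards [hev] with n hn
    intro z hzK
    have hzb := hKcb hzK
    have hb := dbr_eval_bound hHE (f - g n) hzb
    have heq : JE f z - JE (g n) z = JE (f - g n) z := by rw [map_sub]; rfl
    calc dist (JE f z) (JE (g n) z) = ‖JE f z - JE (g n) z‖ := dist_eq_norm _ _
    _ = ‖JE (f - g n) z‖ := by rw [heq]
    _ ≤ Real.sqrt ((1 - ‖z‖^2)⁻¹) * ‖f - g n‖ := hb
    _ ≤ C * ‖f - g n‖ := mul_le_mul_of_nonneg_right (hCb z hzK) (norm_nonneg _)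
    _ ≤ C * (ε / (C + 1)) := mul_le_mul_of_nonneg_left (le_of_lt hn) hC0
    _ < ε := by
        rw [div_eq_mul_inv]
        calc C * (ε * (C+1)⁻¹) = ε * (C / (C + 1)) := by ring
        _ < ε * 1 := by
            apply mul_lt_mul_of_pos_left _ hε
            rw [div_lt_one (by linarith)]
            linarith
        _ = ε := mul_one ε
  exact hlim.differentiableOn
    (Filter.Eventually.of_forall (fun n => hgen (g n) (hgK n))) isOpen_ball


lemma redheffer_param_identities {Ds Dt : Type*}
    [NormedAddCommGroup Ds] [NormedSpace ℂ Ds] [CompleteSpace Ds]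
    [NormedAddCommGroup Dt] [NormedSpace ℂ Dt] [CompleteSpace Dt]
    (e : Dt →L[ℂ] Ds) (w : Ds →L[ℂ] Dt) (h : ‖e ∘L w‖ < 1) :
    e ∘L (1 + w ∘L (Ring.inverse (1 - e ∘L w) ∘L e)) = Ring.inverse (1 - e ∘L w) ∘L e ∧
    (1 + w ∘L (Ring.inverse (1 - e ∘L w) ∘L e)) ∘L (1 - w ∘L e) = 1 := by
  set v : Ds →L[ℂ] Ds := Ring.inverse (1 - e ∘L w) with hv
  have hu : IsUnit (1 - e ∘L w) := myIsUnit' _ h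
  have hmul1 : (1 - e ∘L w) * v = 1 := Ring.mul_inverse_cancel _ hu
  have hmul2 : v * (1 - e ∘L w) = 1 := Ring.inverse_mul_cancel _ hu
  have hA1 : ∀ x : Ds, v x - e (w (v x)) = x := by
    intro x
    have h1 := congrArg (fun (T : Ds →L[ℂ] Ds) => T x) hmul1
    simpa [ContinuousLinearMap.mul_apply, sub_apply, comp_apply, one_apply] using h1
  have hA2 : ∀ x : Ds, v (x - e (w x)) = x := by
    intro x
    have h1 := congrArg (fun (T : Ds →L[ℂ] Ds) => T x) hmul2
    simpa [ContinuousLinearMap.mul_apply, sub_apply, comp_apply, one_apply] using h1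
  clear_value v
  constructor
  · refine ContinuousLinearMap.ext fun x => ?_
    simp only [comp_apply, add_apply, one_apply]
    have h1 := hA1 (e x)
    rw [map_add]
    exact (sub_eq_iff_eq_add.mp h1).symm
  · refine ContinuousLinearMap.ext fun x => ?_
    simp only [comp_apply, add_apply, sub_apply, ContinuousLinearMap.one_apply]
    have h3 : e (x - w (e x)) = e x - e (w (e x)) := by rw [map_sub]
    rw [h3, hA2 (e x)]
    abel


lemma param_unique {X0 U Y Ds Dt : Type*}
    [NormedAddCommGroup X0] [NormedSpace ℂ X0] [CompleteSpace X0]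
    [NormedAddCommGroup U] [NormedSpace ℂ U]
    [NormedAddCommGroup Y] [NormedSpace ℂ Y]
    [NormedAddCommGroup Ds] [NormedSpace ℂ Ds] [CompleteSpace Ds]
    [NormedAddCommGroup Dt] [NormedSpace ℂ Dt] [CompleteSpace Dt]
    (A : X0 →L[ℂ] X0) (B1 : U →L[ℂ] X0) (B2 : Ds →L[ℂ] X0)
    (C1 : X0 →L[ℂ] Y) (C2 : X0 →L[ℂ] Dt) (D12 : Ds →L[ℂ] Y) (D21 : U →L[ℂ] Dt)
    (hAle : ‖A‖ ≤ 1)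
    (hker : ∀ h : ℂ → Ds, AnalyticOnNhd ℂ h (ball (0:ℂ) 1) →
      (∀ z ∈ ball (0:ℂ) 1, tblock A B2 C1 D12 z (h z) = 0) →
      ∀ z ∈ ball (0:ℂ) 1, h z = 0)
    (hdense : ∀ g : ℂ → Dt, AnalyticOnNhd ℂ g (ball (0:ℂ) 1) →
      ∀ Kc : Set ℂ, IsCompact Kc → Kc ⊆ ball (0:ℂ) 1 → ∀ ε : ℝ, 0 < ε →
        ∃ h : ℂ → U, AnalyticOnNhd ℂ h (ball (0:ℂ) 1) ∧
          ∀ z ∈ Kc, ‖tblock A B1 C2 D21 z (h z) - g z‖ < ε)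
    (F₁ F₂ : ℂ → (Dt →L[ℂ] Ds))
    (hF1d : DifferentiableOn ℂ F₁ (ball (0:ℂ) 1))
    (hF2d : DifferentiableOn ℂ F₂ (ball (0:ℂ) 1))
    (hop : ∀ z ∈ ball (0:ℂ) 1, ∀ v : U,
      tblock A B2 C1 D12 z (F₁ z (tblock A B1 C2 D21 z v))
        = tblock A B2 C1 D12 z (F₂ z (tblock A B1 C2 D21 z v)))
    {z1 : ℂ} (hzz : z1 ∈ ball (0:ℂ) 1) : F₁ z1 = F₂ z1 := by
  have hCnn : (0:ℝ) ≤ ‖F₁ z1 - F₂ z1‖ := norm_nonneg _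
  refine ContinuousLinearMap.ext fun d => ?_
  have key : ∀ ε : ℝ, 0 < ε → ‖(F₁ z1 - F₂ z1) d‖ ≤ ‖F₁ z1 - F₂ z1‖ * ε := by
    intro ε hε
    obtain ⟨h, hha, hhb⟩ := hdense (fun _ => d) analyticOnNhd_const {z1}
      isCompact_singleton (by simpa using hzz) ε hε
    have hq0 : ∀ z ∈ ball (0:ℂ) 1,
        tblock A B2 C1 D12 z ((F₁ z - F₂ z) (tblock A B1 C2 D21 z (h z))) = 0 := by
      intro z hz
      rw [sub_apply, map_sub, hop z hz (h z), sub_self]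
    have hqd : DifferentiableOn ℂ
        (fun z => (F₁ z - F₂ z) (tblock A B1 C2 D21 z (h z))) (ball (0:ℂ) 1) := by
      intro z hz
      exact ((hF1d z hz).sub (hF2d z hz)).clm_apply
        ((tblock_diffOn A B1 C2 D21 hAle z hz).clm_apply
          (hha z hz).differentiableAt.differentiableWithinAt)
    have hq := hker _ (hqd.analyticOnNhd isOpen_ball) hq0 z1 hzz
    have hap : ‖tblock A B1 C2 D21 z1 (h z1) - d‖ < ε := by simpa using hhb z1 rfl
    have h5 : (F₁ z1 - F₂ z1) d
        = (F₁ z1 - F₂ z1) (d - tblock A B1 C2 D21 z1 (h z1)) := by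
      rw [map_sub, hq, sub_zero]
    calc ‖(F₁ z1 - F₂ z1) d‖
        = ‖(F₁ z1 - F₂ z1) (d - tblock A B1 C2 D21 z1 (h z1))‖ := by rw [h5]
    _ ≤ ‖F₁ z1 - F₂ z1‖ * ‖d - tblock A B1 C2 D21 z1 (h z1)‖ := le_opNorm _ _
    _ ≤ ‖F₁ z1 - F₂ z1‖ * ε := by
        apply mul_le_mul_of_nonneg_left _ hCnn
        rw [norm_sub_rev]; exact le_of_lt hap
  have hzero : (F₁ z1 - F₂ z1) d = 0 := by
    by_contra hne
    have hpos : 0 < ‖(F₁ z1 - F₂ z1) d‖ := norm_pos_iff.mpr hne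
    set vn := ‖(F₁ z1 - F₂ z1) d‖ with hvn
    set Cn := ‖F₁ z1 - F₂ z1‖ with hCn
    have hεp : 0 < vn / (Cn + 1) / 2 := by positivity
    have hk := key _ hεp
    have h6 : Cn * (vn / (Cn + 1) / 2) < vn := by
      rw [div_div]
      have h7 : Cn * (vn / ((Cn + 1) * 2)) = vn * (Cn / ((Cn + 1) * 2)) := by ring
      rw [h7]
      have h8 : Cn / ((Cn + 1) * 2) < 1 := by
        rw [div_lt_one (by positivity)]
        linarith
      calc vn * (Cn / ((Cn + 1) * 2)) < vn * 1 := mul_lt_mul_of_pos_left h8 hpos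
      _ = vn := mul_one vn
    linarith
  have h9 : F₁ z1 d - F₂ z1 d = 0 := by rw [← sub_apply]; exact hzero
  exact sub_eq_zero.mp h9

end Helpers

/-- Let `Σ` be the characteristic function arising from an
`AIP_S`-admissible data set via the Redheffer construction.  Assume that the
multiplication operator `M_{Σ12} : Hol_{Δ̃*}(D) → Hol_Y(D)` has trivial kernel and that
`M_{Σ21} : Hol_U(D) → Hol_{Δ̃}(D)` has dense range (in the topology of uniform
convergence on compact subsets of `D`).  Then the Redheffer transform
`R_Σ : S(Δ̃,Δ̃*) → S(U,Y)` is injective and, for every `ℰ ∈ S(Δ̃,Δ̃*)` (here realized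
by the universally quantified data `ℰ, HE, JE, kE`), the multiplication operator
`M_G : H(K_ℰ) → H(K_S)` (with `G(z) = Σ12(z)(I − ℰ(z)Σ22(z))^{-1}` and `S = R_Σ[ℰ]`)
has trivial kernel. -/


theorem stmt9
    {X U Y X0 Dt Ds : Type*}
    [NormedAddCommGroup X] [InnerProductSpace ℂ X] [CompleteSpace X]
    [NormedAddCommGroup U] [InnerProductSpace ℂ U] [CompleteSpace U]
    [NormedAddCommGroup Y] [InnerProductSpace ℂ Y] [CompleteSpace Y]
    [NormedAddCommGroup X0] [InnerProductSpace ℂ X0] [CompleteSpace X0]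
    [NormedAddCommGroup Dt] [InnerProductSpace ℂ Dt] [CompleteSpace Dt]
    [NormedAddCommGroup Ds] [InnerProductSpace ℂ Ds] [CompleteSpace Ds]
    -- the `AIP_S`-admissible data set
    (P T : X →L[ℂ] X) (E : X →L[ℂ] Y) (N : X →L[ℂ] U)
    (hPpos : P.IsPositive)
    (hStein : P - adjoint T ∘L P ∘L T = adjoint E ∘L E - adjoint N ∘L N)
    (OET : X → ℂ → Y) (ONT : X → ℂ → U)
    (hOET : ∀ x0 : X, ∀ z ∈ ball (0:ℂ) 1,
      HasSum (fun n : ℕ => z ^ n • E ((T ^ n) x0)) (OET x0 z))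
    (hONT : ∀ x0 : X, ∀ z ∈ ball (0:ℂ) 1,
      HasSum (fun n : ℕ => z ^ n • N ((T ^ n) x0)) (ONT x0 z))
    -- the unitary colligation constructed from `{P,T,E,N}`
    (ρ : X →L[ℂ] X0)
    (A : X0 →L[ℂ] X0) (B1 : U →L[ℂ] X0) (B2 : Ds →L[ℂ] X0)
    (C1 : X0 →L[ℂ] Y) (C2 : X0 →L[ℂ] Dt)
    (D11 : U →L[ℂ] Y) (D12 : Ds →L[ℂ] Y) (D21 : U →L[ℂ] Dt)
    (hcol : IsRedhefferColligation P T E N ρ A B1 B2 C1 C2 D11 D12 D21)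
    -- `M_{Σ12} : Hol_{Δ̃*}(D) → Hol_Y(D)` has trivial kernel
    (hker : ∀ h : ℂ → Ds, AnalyticOnNhd ℂ h (ball (0:ℂ) 1) →
      (∀ z ∈ ball (0:ℂ) 1, tblock A B2 C1 D12 z (h z) = 0) →
      ∀ z ∈ ball (0:ℂ) 1, h z = 0)
    -- `M_{Σ21} : Hol_U(D) → Hol_{Δ̃}(D)` has dense range
    (hdense : ∀ g : ℂ → Dt, AnalyticOnNhd ℂ g (ball (0:ℂ) 1) →
      ∀ Kc : Set ℂ, IsCompact Kc → Kc ⊆ ball (0:ℂ) 1 → ∀ ε : ℝ, 0 < ε →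
        ∃ h : ℂ → U, AnalyticOnNhd ℂ h (ball (0:ℂ) 1) ∧
          ∀ z ∈ Kc, ‖tblock A B1 C2 D21 z (h z) - g z‖ < ε)
    -- an arbitrary parameter `ℰ ∈ S(Δ̃,Δ̃*)` together with the space `H(K_ℰ)`
    (ℰ : ℂ → (Dt →L[ℂ] Ds)) (hℰ : IsSchur ℰ)
    (HE : Type*) [NormedAddCommGroup HE] [InnerProductSpace ℂ HE] [CompleteSpace HE]
    (JE : HE →ₗ[ℂ] (ℂ → Ds)) (kE : ℂ → Ds → HE) (hHE : IsDBRSpace ℰ HE JE kE) :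
    -- the Redheffer transform is injective
    (∀ ℰ₁ ℰ₂ : ℂ → (Dt →L[ℂ] Ds), IsSchur ℰ₁ → IsSchur ℰ₂ →
      (∀ z ∈ ball (0:ℂ) 1,
        redheffer A B1 B2 C1 C2 D11 D12 D21 ℰ₁ z
          = redheffer A B1 B2 C1 C2 D11 D12 D21 ℰ₂ z) →
      ∀ z ∈ ball (0:ℂ) 1, ℰ₁ z = ℰ₂ z) ∧
    -- the multiplication operator `M_G : H(K_ℰ) → H(K_S)` has trivial kernel
    (∀ h : HE,
      (∀ z ∈ ball (0:ℂ) 1, Gfun (U := U) A B2 C1 C2 D12 ℰ z (JE h z) = 0) →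
      h = 0) := by
  have hAle : ‖A‖ ≤ 1 := by
    refine opNorm_le_bound _ zero_le_one ?_
    intro x
    have h := hcol.isometric x 0 0
    simp only [map_zero, add_zero, norm_zero] at h
    nlinarith [norm_nonneg (A x), norm_nonneg x, norm_nonneg (C1 x), norm_nonneg (C2 x)]
  have hWle : ∀ {z : ℂ}, ‖z‖ < 1 → ‖tblock A B2 C2 0 z‖ ≤ ‖z‖ := by
    intro z hz
    refine opNorm_le_bound _ (norm_nonneg z) ?_
    intro d
    exact sigma22_contract A B1 B2 C1 C2 D11 D12 D21 hcol.isometric hz d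
  have hEWlt : ∀ (E' : ℂ → (Dt →L[ℂ] Ds)), IsSchur E' → ∀ {z : ℂ}, z ∈ ball (0:ℂ) 1 →
      ‖(E' z) ∘L tblock A B2 C2 0 z‖ < 1 := by
    intro E' hs z hz
    have h1 : ‖z‖ < 1 := mem_ball_zero_iff.mp hz
    calc ‖(E' z) ∘L tblock A B2 C2 0 z‖ ≤ ‖E' z‖ * ‖tblock A B2 C2 0 z‖ := opNorm_comp_le _ _
    _ ≤ 1 * ‖z‖ := mul_le_mul (hs.2 z hz) (hWle h1) (norm_nonneg _) zero_le_one
    _ < 1 := by simpa using h1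
  have hUnit : ∀ (E' : ℂ → (Dt →L[ℂ] Ds)), IsSchur E' → ∀ {z : ℂ}, z ∈ ball (0:ℂ) 1 →
      IsUnit (1 - (E' z) ∘L tblock A B2 C2 0 z) :=
    fun E' hs _ hz => myIsUnit' _ (hEWlt E' hs hz)
  have hInvdiff : ∀ (E' : ℂ → (Dt →L[ℂ] Ds)), IsSchur E' → DifferentiableOn ℂ
      (fun z => Ring.inverse (1 - (E' z) ∘L tblock A B2 C2 0 z)) (ball (0:ℂ) 1) := by
    intro E' hs z hz
    have hEd : DifferentiableAt ℂ E' z := (hs.1 z hz).differentiableAt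
    have hWd : DifferentiableAt ℂ (fun z => tblock A B2 C2 0 z) z :=
      (tblock_diffOn A B2 C2 0 hAle).differentiableAt (isOpen_ball.mem_nhds hz)
    have h1 : DifferentiableAt ℂ
        (fun z => (1 : Ds →L[ℂ] Ds) - (E' z) ∘L tblock A B2 C2 0 z) z :=
      (differentiableAt_const _).sub (hEd.clm_comp hWd)
    exact (h1.inverse (hUnit E' hs hz)).differentiableWithinAt
  have hFdiff : ∀ (E' : ℂ → (Dt →L[ℂ] Ds)), IsSchur E' → DifferentiableOn ℂ
      (fun z => (Ring.inverse (1 - (E' z) ∘L tblock A B2 C2 0 z)) ∘L E' z) (ball (0:ℂ) 1) := by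
    intro E' hs z hz
    exact (hInvdiff E' hs z hz).clm_comp (hs.1 z hz).differentiableAt.differentiableWithinAt
  constructor
  · -- injectivity of the Redheffer transform
    intro ℰ₁ ℰ₂ hS1 hS2 heq z0 hz0
    have hop : ∀ z ∈ ball (0:ℂ) 1, ∀ v : U,
        tblock A B2 C1 D12 z
          (((Ring.inverse (1 - (ℰ₁ z) ∘L tblock A B2 C2 0 z)) ∘L ℰ₁ z)
            (tblock A B1 C2 D21 z v))
          = tblock A B2 C1 D12 z
            (((Ring.inverse (1 - (ℰ₂ z) ∘L tblock A B2 C2 0 z)) ∘L ℰ₂ z)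
              (tblock A B1 C2 D21 z v)) := by
      intro z hz v
      have h0 := heq z hz
      simp only [redheffer] at h0
      have h1 := add_left_cancel h0
      have h2 := congrArg (fun (Tm : U →L[ℂ] Y) => Tm v) h1
      simp only [comp_apply] at h2
      simp only [comp_apply]
      exact h2
    have hFz : (Ring.inverse (1 - (ℰ₁ z0) ∘L tblock A B2 C2 0 z0)) ∘L ℰ₁ z0
        = (Ring.inverse (1 - (ℰ₂ z0) ∘L tblock A B2 C2 0 z0)) ∘L ℰ₂ z0 :=
      param_unique A B1 B2 C1 C2 D12 D21 hAle hker hdense _ _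
        (hFdiff ℰ₁ hS1) (hFdiff ℰ₂ hS2) hop hz0
    have hid1 := redheffer_param_identities (ℰ₁ z0) (tblock A B2 C2 0 z0) (hEWlt ℰ₁ hS1 hz0)
    have hid2 := redheffer_param_identities (ℰ₂ z0) (tblock A B2 C2 0 z0) (hEWlt ℰ₂ hS2 hz0)
    calc ℰ₁ z0 = ℰ₁ z0 ∘L ((1 + tblock A B2 C2 0 z0 ∘L
            ((Ring.inverse (1 - (ℰ₁ z0) ∘L tblock A B2 C2 0 z0)) ∘L ℰ₁ z0))
          ∘L (1 - tblock A B2 C2 0 z0 ∘L ℰ₁ z0)) := by rw [hid1.2, one_def, comp_id]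
    _ = (ℰ₁ z0 ∘L (1 + tblock A B2 C2 0 z0 ∘L
            ((Ring.inverse (1 - (ℰ₁ z0) ∘L tblock A B2 C2 0 z0)) ∘L ℰ₁ z0)))
          ∘L (1 - tblock A B2 C2 0 z0 ∘L ℰ₁ z0) := by rw [comp_assoc]
    _ = ((Ring.inverse (1 - (ℰ₂ z0) ∘L tblock A B2 C2 0 z0)) ∘L ℰ₂ z0)
          ∘L (1 - tblock A B2 C2 0 z0 ∘L ℰ₁ z0) := by rw [hid1.1, hFz]
    _ = (ℰ₂ z0 ∘L (1 + tblock A B2 C2 0 z0 ∘L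
            ((Ring.inverse (1 - (ℰ₂ z0) ∘L tblock A B2 C2 0 z0)) ∘L ℰ₂ z0)))
          ∘L (1 - tblock A B2 C2 0 z0 ∘L ℰ₁ z0) := by rw [hid2.1]
    _ = ℰ₂ z0 ∘L ((1 + tblock A B2 C2 0 z0 ∘L
            ((Ring.inverse (1 - (ℰ₂ z0) ∘L tblock A B2 C2 0 z0)) ∘L ℰ₂ z0))
          ∘L (1 - tblock A B2 C2 0 z0 ∘L ℰ₁ z0)) := by rw [comp_assoc]
    _ = ℰ₂ z0 ∘L ((1 + tblock A B2 C2 0 z0 ∘L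
            ((Ring.inverse (1 - (ℰ₁ z0) ∘L tblock A B2 C2 0 z0)) ∘L ℰ₁ z0))
          ∘L (1 - tblock A B2 C2 0 z0 ∘L ℰ₁ z0)) := by rw [hFz]
    _ = ℰ₂ z0 := by rw [hid1.2, one_def, comp_id]
  · -- triviality of the kernel of M_G
    intro h hG0
    have hJd : DifferentiableOn ℂ (fun z => JE h z) (ball (0:ℂ) 1) := by
      apply dbr_diffOn hHE _ h
      intro z hz
      exact (hℰ.1 z hz).differentiableAt.differentiableWithinAt
    have hqd : DifferentiableOn ℂ
        (fun z => Ring.inverse (1 - (ℰ z) ∘L tblock A B2 C2 0 z) (JE h z)) (ball (0:ℂ) 1) := by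
      intro z hz
      exact (hInvdiff ℰ hℰ z hz).clm_apply (hJd z hz)
    have hq0 : ∀ z ∈ ball (0:ℂ) 1,
        tblock A B2 C1 D12 z (Ring.inverse (1 - (ℰ z) ∘L tblock A B2 C2 0 z) (JE h z)) = 0 := by
      intro z hz
      have h1 := hG0 z hz
      simpa [Gfun, comp_apply] using h1
    have hq := hker _ (hqd.analyticOnNhd isOpen_ball) hq0
    refine hHE.ext h 0 ?_
    intro z hz
    have h1 : (1 - (ℰ z) ∘L tblock A B2 C2 0 z) *
        Ring.inverse (1 - (ℰ z) ∘L tblock A B2 C2 0 z) = 1 :=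
      Ring.mul_inverse_cancel _ (hUnit ℰ hℰ hz)
    have h2 := congrArg (fun (T : Ds →L[ℂ] Ds) => T (JE h z)) h1
    simp only [ContinuousLinearMap.mul_apply, ContinuousLinearMap.one_apply] at h2
    rw [hq z hz] at h2
    simp only [map_zero] at h2
    rw [map_zero]
    show JE h z = (0 : ℂ → Ds) z
    rw [← h2]
    simp


end
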